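/- (Touchard's congruence) For any prime p and any nonnegative integer n, B_{p+n} ≡ B_n + B_{n+1} (mod p). -/
import Mathlib


/-- The Bell numbers: `bell n` is the number of partitions of an `n`-element set,
determined by `bell 0 = 1` and `bell (n+1) = ∑_{k=0}^{n} C(n,k) * bell k`. -/
def bell : ℕ → ℕ
  | 0 => 1
  | n + 1 => ∑ k ∈ (Finset.range (n + 1)).attach, n.choose k * bell k
decreasing_by exact Finset.mem_range.mp k.2

open Polynomial Finset

lemma bell_succ (n : ℕ) : bell (n + 1) = ∑ k ∈ Finset.range (n + 1), n.choose k * bell k := by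
  rw [bell]
  exact Finset.sum_attach (Finset.range (n + 1)) (fun k => n.choose k * bell k)

/-- The Bell "umbral" linear functional: sends `∑ cₖ Xᵏ` to `∑ cₖ * bell k`. -/
noncomputable def bellL (p : ℕ) : (ZMod p)[X] →ₗ[ZMod p] ZMod p :=
  Polynomial.lsum fun k => LinearMap.toSpanSingleton (ZMod p) (ZMod p) ((bell k : ZMod p))

lemma bellL_monomial (p : ℕ) (n : ℕ) (c : ZMod p) :
    bellL p (monomial n c) = c * bell n := by
  simp [bellL, Polynomial.lsum_apply, Polynomial.sum_monomial_index,
    LinearMap.toSpanSingleton_apply, smul_eq_mul]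

lemma bellL_X_pow (p : ℕ) (n : ℕ) : bellL p (X ^ n) = bell n := by
  rw [← Polynomial.monomial_one_right_eq_X_pow, bellL_monomial, one_mul]

/-- The key umbral property, equivalent to the Bell recursion. -/
lemma bellL_X_mul (p : ℕ) (f : (ZMod p)[X]) :
    bellL p (X * f) = bellL p (f.comp (X + 1)) := by
  induction f using Polynomial.induction_on' with
  | add f g hf hg => simp only [mul_add, map_add, add_comp, hf, hg]
  | monomial n c =>
    rw [mul_comm, monomial_mul_X, bellL_monomial, monomial_comp]
    have hpow : ((X + 1 : (ZMod p)[X])) ^ n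
        = ∑ k ∈ Finset.range (n + 1), monomial k ((n.choose k : ZMod p)) := by
      rw [add_pow]
      refine Finset.sum_congr rfl fun k _ => ?_
      rw [one_pow, mul_one, ← C_eq_natCast, mul_comm, ← C_mul_X_pow_eq_monomial]
    rw [hpow, Finset.mul_sum, map_sum]
    have : ∀ k ∈ Finset.range (n + 1),
        bellL p (C c * monomial k ((n.choose k : ZMod p)))
          = c * ((n.choose k : ZMod p) * bell k) := by
      intro k _
      rw [C_mul_monomial, bellL_monomial, mul_assoc]
    rw [Finset.sum_congr rfl this, ← Finset.mul_sum, bell_succ]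
    push_cast
    rfl

lemma bellL_prod_mul (p : ℕ) (k : ℕ) (f : (ZMod p)[X]) :
    bellL p ((∏ i ∈ Finset.range k, (X - C (i : ZMod p))) * f)
      = bellL p (f.comp (X + C (k : ZMod p))) := by
  induction k generalizing f with
  | zero => simp
  | succ k ih =>
    rw [Finset.prod_range_succ, mul_assoc, ih ((X - C (k : ZMod p)) * f), mul_comp, sub_comp,
      X_comp, C_comp, add_sub_cancel_right, bellL_X_mul, comp_assoc]
    congr 2
    rw [add_comp, X_comp, C_comp]
    push_cast
    rw [C_add, C_1]
    ring

lemma X_pow_card (p : ℕ) (hp : p.Prime) :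
    (X : (ZMod p)[X]) ^ p = (∏ i ∈ Finset.range p, (X - C (i : ZMod p))) + X := by
  haveI := Fact.mk hp
  have hcard : Fintype.card (ZMod p) = p := ZMod.card p
  have h1 : (1 : ℕ) < Fintype.card (ZMod p) := by rw [hcard]; exact hp.one_lt
  have hmonic : ((X : (ZMod p)[X]) ^ Fintype.card (ZMod p) - X).Monic := by
    apply monic_X_pow_sub
    rw [degree_X]
    exact_mod_cast h1
  have hroots := FiniteField.roots_X_pow_card_sub_X (ZMod p)
  have hdeg := FiniteField.X_pow_card_sub_X_natDegree_eq (ZMod p) h1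
  have hprod := prod_multiset_X_sub_C_of_monic_of_roots_card_eq hmonic
    (by rw [hroots, hdeg]; exact Finset.card_univ)
  have huniv : ((X : (ZMod p)[X]) ^ Fintype.card (ZMod p) - X)
      = ∏ a : ZMod p, (X - C a) := by
    rw [← hprod, hroots, Finset.prod_eq_multiset_prod]
  have hrange : (∏ a : ZMod p, (X - C a))
      = ∏ i ∈ Finset.range p, (X - C (i : ZMod p)) := by
    refine Finset.prod_nbij' (fun a => a.val) (fun i => (i : ZMod p)) ?_ ?_ ?_ ?_ ?_
    · intro a _; exact Finset.mem_range.mpr a.val_lt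
    · intro i _; exact Finset.mem_univ _
    · intro a _; exact ZMod.natCast_rightInverse a
    · intro i hi; exact ZMod.val_cast_of_lt (Finset.mem_range.mp hi)
    · intro a _; rw [ZMod.natCast_rightInverse a]
  rw [hcard] at huniv
  calc (X : (ZMod p)[X]) ^ p = (X ^ p - X) + X := by ring
  _ = _ := by rw [huniv, hrange]

/-- Touchard's congruence: `B_{p+n} ≡ B_n + B_{n+1} (mod p)` for every prime `p`. -/
theorem touchard_congruence (p : ℕ) (hp : p.Prime) (n : ℕ) :
    (bell (p + n) : ZMod p) = (bell n : ZMod p) + (bell (n + 1) : ZMod p) := by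
  have h1 : (bell (p + n) : ZMod p) = bellL p (X ^ (p + n)) := (bellL_X_pow p _).symm
  rw [h1, pow_add, X_pow_card p hp, add_mul, map_add, bellL_prod_mul, ZMod.natCast_self, C_0,
    add_zero, comp_X, bellL_X_pow, ← pow_succ', bellL_X_pow]
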